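/- Let X ∈ ℝ^{d×n} with columns x₁,…,x_n, K PSD with largest eigenvalue λ_max, Σ ∈ ℝ^{d'×n}, and Y ∈ ℝ^{d×n}. For every row index j ∈ [d]^q, ‖[Y^{⊗q}·(Σ⊗K)ᵀ]_{j,⋆}‖₂² ≤ λ_max²·Σ_{ℓ=1}^n |[y_ℓ^{⊗q}](j)|²·‖Σ_{⋆,ℓ}‖₂², where y_ℓ is the ℓ-th column of Y. -/

import Mathlib

open Matrix

lemma key_mulVec_bound {n : ℕ} (hn : 0 < n) (K : Matrix (Fin n) (Fin n) ℝ)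
    (hK : K.PosSemidef) (v : Fin n → ℝ) :
    ∑ i, ((K *ᵥ v) i) ^ 2 ≤ (⨆ i, hK.1.eigenvalues i) ^ 2 * ∑ ℓ, v ℓ ^ 2 := by
  set e := hK.1.eigenvalues with he
  set lam := ⨆ i, e i with hlam
  set U := (hK.1.eigenvectorUnitary : Matrix (Fin n) (Fin n) ℝ) with hU
  have hUmem := hK.1.eigenvectorUnitary.2
  have hUU : star U * U = 1 := hUmem.1
  have hUU' : U * star U = 1 := hUmem.2
  have hle : ∀ i, e i ≤ lam := fun i =>
    le_ciSup (Set.Finite.bddAbove (Set.finite_range e)) i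
  have h0 : (0:ℝ) ≤ lam := le_trans (hK.eigenvalues_nonneg ⟨0, hn⟩) (hle _)
  have hspec : K = U * diagonal e * star U := by
    have := hK.1.spectral_theorem
    simpa using this
  have hK2 : K * K = U * diagonal (fun i => e i ^ 2) * star U := by
    conv_lhs => rw [hspec]
    simp only [mul_assoc]
    rw [← mul_assoc (star U) U, hUU, one_mul, ← mul_assoc (diagonal e), diagonal_mul_diagonal]
    have : (fun i => e i * e i) = fun i => e i ^ 2 := funext fun i => (sq (e i)).symm
    rw [this]
  have hdiff : lam ^ 2 • (1 : Matrix (Fin n) (Fin n) ℝ) - K * K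
      = U * diagonal (fun i => lam ^ 2 - e i ^ 2) * star U := by
    have h1 : lam ^ 2 • (1 : Matrix (Fin n) (Fin n) ℝ)
        = U * (lam ^ 2 • (1 : Matrix (Fin n) (Fin n) ℝ)) * star U := by
      rw [mul_smul_comm, smul_mul_assoc, mul_one, hUU']
    rw [hK2, h1]
    have : (lam ^ 2 • (1 : Matrix (Fin n) (Fin n) ℝ))
        = diagonal (fun _ : Fin n => lam ^ 2) := by
      ext i i'
      simp [Matrix.smul_apply, Matrix.one_apply, Matrix.diagonal_apply, mul_ite]
    rw [this, ← sub_mul, ← mul_sub, diagonal_sub]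
  have hPSD : (lam ^ 2 • (1 : Matrix (Fin n) (Fin n) ℝ) - K * K).PosSemidef := by
    rw [hdiff]
    refine PosSemidef.mul_mul_conjTranspose_same ?_ U
    refine PosSemidef.diagonal fun i => ?_
    show (0:ℝ) ≤ lam ^ 2 - e i ^ 2
    have h1 : 0 ≤ e i := hK.eigenvalues_nonneg i
    have := hle i
    nlinarith
  have hquad := hPSD.dotProduct_mulVec_nonneg v
  have hdot : ∑ i, ((K *ᵥ v) i) ^ 2 = dotProduct v ((K * K) *ᵥ v) := by
    have hsym : Kᵀ = K := by
      ext i j'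
      have := hK.1.apply i j'
      simpa using this
    rw [← mulVec_mulVec, dotProduct_mulVec]
    have : v ᵥ* K = K *ᵥ v := by
      conv_lhs => rw [← hsym]
      rw [vecMul_transpose]
    rw [this]
    simp [dotProduct, sq]
  have hexp : dotProduct (star v) ((lam ^ 2 • (1 : Matrix (Fin n) (Fin n) ℝ) - K * K) *ᵥ v)
      = lam ^ 2 * (∑ ℓ, v ℓ ^ 2) - dotProduct v ((K * K) *ᵥ v) := by
    rw [sub_mulVec, dotProduct_sub, smul_mulVec, one_mulVec, dotProduct_smul]
    simp [dotProduct, sq, mul_comm]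
  rw [hdot]
  rw [hexp] at hquad
  linarith

/-- For PSD `K` with largest eigenvalue `λ_max`, each row `j ∈ [d]^q` of
`Y^{⊗q}(Σ ⊗ K)ᵀ` satisfies
`‖[Y^{⊗q}(Σ⊗K)ᵀ]_{j,⋆}‖₂² ≤ λ_max² · Σ_ℓ |[y_ℓ^{⊗q}](j)|²·‖Σ_{⋆,ℓ}‖₂²`. -/
theorem tensor_kernel_row_upper_bound {d d' n q : ℕ} (hn : 0 < n)
    (Y : Matrix (Fin d) (Fin n) ℝ) (Sg : Matrix (Fin d') (Fin n) ℝ)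
    (K : Matrix (Fin n) (Fin n) ℝ) (hK : K.PosSemidef) (j : Fin q → Fin d) :
    ∑ p : Fin d' × Fin n, (∑ ℓ : Fin n, (∏ a, Y (j a) ℓ) * (Sg p.1 ℓ * K p.2 ℓ)) ^ 2
      ≤ (⨆ i, hK.1.eigenvalues i) ^ 2 *
          ∑ ℓ : Fin n, (∏ a, Y (j a) ℓ) ^ 2 * ∑ b : Fin d', Sg b ℓ ^ 2 := by
  set c : Fin n → ℝ := fun ℓ => ∏ a, Y (j a) ℓ with hc
  have step : ∀ b : Fin d',
      ∑ i : Fin n, (∑ ℓ : Fin n, c ℓ * (Sg b ℓ * K i ℓ)) ^ 2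
        ≤ (⨆ i, hK.1.eigenvalues i) ^ 2 * ∑ ℓ, (c ℓ * Sg b ℓ) ^ 2 := by
    intro b
    have := key_mulVec_bound hn K hK (fun ℓ => c ℓ * Sg b ℓ)
    simpa [mulVec, dotProduct, mul_comm, mul_left_comm, mul_assoc] using this
  calc ∑ p : Fin d' × Fin n, (∑ ℓ : Fin n, c ℓ * (Sg p.1 ℓ * K p.2 ℓ)) ^ 2
      = ∑ b : Fin d', ∑ i : Fin n, (∑ ℓ : Fin n, c ℓ * (Sg b ℓ * K i ℓ)) ^ 2 := by
        rw [Fintype.sum_prod_type]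
    _ ≤ ∑ b : Fin d', (⨆ i, hK.1.eigenvalues i) ^ 2 * ∑ ℓ, (c ℓ * Sg b ℓ) ^ 2 :=
        Finset.sum_le_sum fun b _ => step b
    _ = (⨆ i, hK.1.eigenvalues i) ^ 2 * ∑ ℓ : Fin n, c ℓ ^ 2 * ∑ b : Fin d', Sg b ℓ ^ 2 := by
        rw [← Finset.mul_sum, Finset.sum_comm]
        congr 1
        apply Finset.sum_congr rfl
        intro ℓ _
        rw [Finset.mul_sum]
        apply Finset.sum_congr rfl
        intro b _
        ring
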